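/- For the torus with radii R > r > 0 and all u, v, θ, φ ∈ [0, 2π], the squared Euclidean distance between X = p(u, θ) and Y = p(v, φ) is bounded by the squared pseudo-distance: a² + b² + c² − 2ab cos(u − v) ≤ r² δ(θ, φ)² + a b δ(u, v)², where a = R − r cos θ, b = R − r cos φ, c = r sin θ − r sin φ, and δ(x, y) = min(|x − y|, 2π − |x − y|). -/
import Mathlib


open Real

/-- Minimal angular distance between two angles in `[0, 2π]`. -/
noncomputable def angDist (x y : ℝ) : ℝ := min |x - y| (2 * Real.pi - |x - y|)

lemma two_sub_two_cos_le_sq (t : ℝ) : 2 - 2 * Real.cos t ≤ t ^ 2 := by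
  have h1 : Real.sin (t / 2) ^ 2 ≤ (t / 2) ^ 2 := Real.sin_sq_le_sq
  have h2 := Real.sin_sq_add_cos_sq (t / 2)
  have h3 : Real.sin (t / 2) ^ 2 = 1 / 2 - Real.cos t / 2 := by
    have := Real.sin_sq_eq_half_sub (t / 2)
    rw [show 2 * (t / 2) = t by ring] at this
    exact this
  nlinarith

lemma cos_angDist (x y : ℝ) : Real.cos (angDist x y) = Real.cos (x - y) := by
  unfold angDist
  rcases le_total |x - y| (2 * Real.pi - |x - y|) with h | h
  · rw [min_eq_left h, Real.cos_abs]
  · rw [min_eq_right h, Real.cos_sub]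
    simp [Real.cos_abs, Real.cos_two_pi, Real.sin_two_pi]

/-- For the torus with radii `R > r > 0` and all `u, v, θ, φ ∈ [0, 2π]`,
the squared Euclidean distance between `X = p(u, θ)` and `Y = p(v, φ)` is bounded by
the squared pseudo-distance:
`a² + b² + c² − 2ab cos(u − v) ≤ r² δ(θ, φ)² + a b δ(u, v)²`,
where `a = R − r cos θ`, `b = R − r cos φ`, `c = r sin θ − r sin φ`. -/
theorem torus_dist_le_pseudoDist (R r : ℝ) (hRr : R > r) (hr : r > 0)
    (u v θ φ : ℝ) (hu : u ∈ Set.Icc 0 (2 * Real.pi)) (hv : v ∈ Set.Icc 0 (2 * Real.pi))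
    (hθ : θ ∈ Set.Icc 0 (2 * Real.pi)) (hφ : φ ∈ Set.Icc 0 (2 * Real.pi)) :
    (R - r * Real.cos θ) ^ 2 + (R - r * Real.cos φ) ^ 2 +
        (r * Real.sin θ - r * Real.sin φ) ^ 2 -
        2 * (R - r * Real.cos θ) * (R - r * Real.cos φ) * Real.cos (u - v) ≤
      r ^ 2 * angDist θ φ ^ 2 +
        (R - r * Real.cos θ) * (R - r * Real.cos φ) * angDist u v ^ 2 := by
  have ha : 0 < R - r * Real.cos θ := by
    nlinarith [Real.neg_one_le_cos θ, Real.cos_le_one θ]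
  have hb : 0 < R - r * Real.cos φ := by
    nlinarith [Real.neg_one_le_cos φ, Real.cos_le_one φ]
  have h1 : 2 - 2 * Real.cos (θ - φ) ≤ angDist θ φ ^ 2 := by
    have := two_sub_two_cos_le_sq (angDist θ φ)
    rwa [cos_angDist] at this
  have h2 : 2 - 2 * Real.cos (u - v) ≤ angDist u v ^ 2 := by
    have := two_sub_two_cos_le_sq (angDist u v)
    rwa [cos_angDist] at this
  have hc := Real.cos_sub θ φ
  have hs1 := Real.sin_sq_add_cos_sq θ
  have hs2 := Real.sin_sq_add_cos_sq φ
  nlinarith [mul_pos ha hb, mul_le_mul_of_nonneg_left h2 (le_of_lt (mul_pos ha hb)),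
    mul_le_mul_of_nonneg_left h1 (sq_nonneg r)]
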